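/- Let n ≥ 4 and 1 ≤ p < q < n-1 ≤ n (with q ≤ n-2 strictly, i.e., p ≤ n-3). For any two distinct p-subsets u, v of [n] and any two distinct q-subsets s, t of [n], there exist q-subsets u', v' with u ⊆ u', v ⊆ v', u' ≠ v', and {u',v'} ∩ {s,t} = ∅. -/
import Mathlib

open Finset

lemma card_supersets {n q : ℕ} (x : Finset (Fin n)) (hxq : x.card ≤ q) (hq : q ≤ n) :
    ((Finset.univ.powersetCard q).filter (x ⊆ ·)).card
      = (n - x.card).choose (q - x.card) := by
  classical
  have hcompl : xᶜ.card = n - x.card := by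
    rw [Finset.card_compl, Fintype.card_fin]
  rw [← hcompl, ← Finset.card_powersetCard (q - x.card) xᶜ]
  apply Finset.card_bij' (fun y _ => y \ x) (fun z _ => x ∪ z)
  · intro y hy
    simp only [Finset.mem_filter, Finset.mem_powersetCard] at hy
    obtain ⟨⟨_, hyc⟩, hxy⟩ := hy
    simp only [Finset.mem_powersetCard]
    constructor
    · intro a ha
      simp only [Finset.mem_sdiff] at ha
      simp [Finset.mem_compl, ha.2]
    · rw [Finset.card_sdiff_of_subset hxy, hyc]
  · intro z hz
    simp only [Finset.mem_powersetCard] at hz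
    obtain ⟨hzc, hzcard⟩ := hz
    have hdisj : Disjoint x z := by
      rw [Finset.disjoint_left]
      intro a ha haz
      have := hzc haz
      simp [Finset.mem_compl] at this
      exact this ha
    simp only [Finset.mem_filter, Finset.mem_powersetCard]
    refine ⟨⟨Finset.subset_univ _, ?_⟩, Finset.subset_union_left⟩
    rw [Finset.card_union_of_disjoint hdisj, hzcard]
    omega
  · intro y hy
    simp only [Finset.mem_filter, Finset.mem_powersetCard] at hy
    exact Finset.union_sdiff_of_subset hy.2
  · intro z hz
    simp only [Finset.mem_powersetCard] at hz
    have hdisj : Disjoint x z := by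
      rw [Finset.disjoint_left]
      intro a ha haz
      have := hz.1 haz
      simp [Finset.mem_compl] at this
      exact this ha
    rw [Finset.union_sdiff_cancel_left hdisj]

theorem distinct_extensions_avoiding_two (n p q : ℕ) (hn : 4 ≤ n)
    (hp : 1 ≤ p) (hpq : p < q) (hq : q ≤ n - 2)
    (u v s t : Finset (Fin n)) (hu : u.card = p) (hv : v.card = p) (huv : u ≠ v)
    (hs : s.card = q) (ht : t.card = q) (hst : s ≠ t) :
    ∃ u' v' : Finset (Fin n), u'.card = q ∧ v'.card = q ∧ u ⊆ u' ∧ v ⊆ v' ∧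
      u' ≠ v' ∧ u' ≠ s ∧ u' ≠ t ∧ v' ≠ s ∧ v' ≠ t := by
  classical
  have hqn : q ≤ n := by omega
  set Eu := (Finset.univ.powersetCard q).filter (u ⊆ ·) with hEudef
  set Ev := (Finset.univ.powersetCard q).filter (v ⊆ ·) with hEvdef
  have memEu : ∀ y, y ∈ Eu ↔ u ⊆ y ∧ y.card = q := by
    intro y
    simp [hEudef, Finset.mem_filter, Finset.mem_powersetCard]
    tauto
  have memEv : ∀ y, y ∈ Ev ↔ v ⊆ y ∧ y.card = q := by
    intro y
    simp [hEvdef, Finset.mem_filter, Finset.mem_powersetCard]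
    tauto
  have hEuc : Eu.card = (n - p).choose (q - p) := by
    rw [hEudef, card_supersets u (by omega) hqn, hu]
  have hEvc : Ev.card = (n - p).choose (q - p) := by
    rw [hEvdef, card_supersets v (by omega) hqn, hv]
  have h3 : 3 ≤ (n - p).choose (q - p) := by
    calc 3 = Nat.choose 3 2 := by decide
    _ ≤ Nat.choose (q - p + 2) 2 := Nat.choose_le_choose 2 (by omega)
    _ = Nat.choose (q - p + 2) (q - p) := by
        have := Nat.choose_symm (n := q - p + 2) (k := q - p) (by omega)
        simpa using this
    _ ≤ Nat.choose (n - p) (q - p) := Nat.choose_le_choose _ (by omega)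
  have hEu3 : 3 ≤ Eu.card := hEuc ▸ h3
  have hEv3 : 3 ≤ Ev.card := hEvc ▸ h3
  -- pick u' ∈ Eu avoiding {s, t}
  have hne1 : (Eu \ {s, t}).Nonempty := by
    rw [← Finset.card_pos]
    have h1 : Eu.card - ({s, t} : Finset (Finset (Fin n))).card ≤ (Eu \ {s, t}).card :=
      Finset.le_card_sdiff _ _
    have h2 : ({s, t} : Finset (Finset (Fin n))).card ≤ 2 :=
      (Finset.card_insert_le _ _).trans (by simp)
    omega
  obtain ⟨u', hu'⟩ := hne1
  rw [Finset.mem_sdiff] at hu'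
  obtain ⟨hu'Eu, hu'st⟩ := hu'
  simp only [Finset.mem_insert, Finset.mem_singleton, not_or] at hu'st
  obtain ⟨hu's, hu't⟩ := hu'st
  rw [memEu] at hu'Eu
  by_cases hcase : (Ev \ {s, t, u'}).Nonempty
  · obtain ⟨v', hv'⟩ := hcase
    rw [Finset.mem_sdiff] at hv'
    obtain ⟨hv'Ev, hv'stu⟩ := hv'
    simp only [Finset.mem_insert, Finset.mem_singleton, not_or] at hv'stu
    rw [memEv] at hv'Ev
    exact ⟨u', v', hu'Eu.2, hv'Ev.2, hu'Eu.1, hv'Ev.1,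
      (Ne.symm hv'stu.2.2), hu's, hu't, hv'stu.1, hv'stu.2.1⟩
  · -- Ev ⊆ {s, t, u'}, so Ev = {s, t, u'}
    have hsub : Ev ⊆ {s, t, u'} := by
      rw [Finset.not_nonempty_iff_eq_empty, Finset.sdiff_eq_empty_iff_subset] at hcase
      exact hcase
    have hEveq : Ev = {s, t, u'} := by
      apply Finset.eq_of_subset_of_card_le hsub
      have : ({s, t, u'} : Finset (Finset (Fin n))).card ≤ 3 := by
        apply le_trans (Finset.card_insert_le _ _)
        have := (Finset.card_insert_le t ({u'} : Finset (Finset (Fin n))))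
        simp at this ⊢
        omega
      omega
    have hvs : v ⊆ s := ((memEv s).mp (hEveq ▸ by simp)).1
    have hvt : v ⊆ t := ((memEv t).mp (hEveq ▸ by simp)).1
    have hvu' : v ⊆ u' := ((memEv u').mp (hEveq ▸ by simp)).1
    by_cases hcase2 : (Eu \ {s, t, u'}).Nonempty
    · obtain ⟨u'', hu''⟩ := hcase2
      rw [Finset.mem_sdiff] at hu''
      obtain ⟨hu''Eu, hu''stu⟩ := hu''
      simp only [Finset.mem_insert, Finset.mem_singleton, not_or] at hu''stu
      rw [memEu] at hu''Eu
      exact ⟨u'', u', hu''Eu.2, hu'Eu.2, hu''Eu.1, hvu',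
        hu''stu.2.2, hu''stu.1, hu''stu.2.1, hu's, hu't⟩
    · have hsub2 : Eu ⊆ {s, t, u'} := by
        rw [Finset.not_nonempty_iff_eq_empty, Finset.sdiff_eq_empty_iff_subset] at hcase2
        exact hcase2
      have hEueq : Eu = {s, t, u'} := by
        apply Finset.eq_of_subset_of_card_le hsub2
        have : ({s, t, u'} : Finset (Finset (Fin n))).card ≤ 3 := by
          apply le_trans (Finset.card_insert_le _ _)
          have := (Finset.card_insert_le t ({u'} : Finset (Finset (Fin n))))
          simp at this ⊢
          omega
        omega
      have hus : u ⊆ s := ((memEu s).mp (hEueq ▸ by simp)).1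
      have hut : u ⊆ t := ((memEu t).mp (hEueq ▸ by simp)).1
      -- Eu.card = 3 exactly
      have hcard3 : (n - p).choose (q - p) = 3 := by
        have h1 : Eu.card ≤ 3 := by
          rw [hEueq]
          apply le_trans (Finset.card_insert_le _ _)
          have := (Finset.card_insert_le t ({u'} : Finset (Finset (Fin n))))
          simp at this ⊢
          omega
        omega
      -- deduce q = p + 1
      have hq1 : q = p + 1 := by
        by_contra hne
        have hk2 : 2 ≤ q - p := by omega
        have : (6 : ℕ) ≤ (n - p).choose (q - p) := by
          calc (6 : ℕ) = Nat.choose 4 2 := by decide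
          _ ≤ Nat.choose (q - p + 2) 2 := Nat.choose_le_choose 2 (by omega)
          _ = Nat.choose (q - p + 2) (q - p) := by
              have := Nat.choose_symm (n := q - p + 2) (k := q - p) (by omega)
              simpa using this
          _ ≤ Nat.choose (n - p) (q - p) := Nat.choose_le_choose _ (by omega)
        omega
      -- contradiction: u ∪ v ⊆ s ∩ t, |u ∪ v| ≥ p+1, |s ∩ t| ≤ q-1 = p
      exfalso
      have hsubst : u ∪ v ⊆ s ∩ t := by
        apply Finset.union_subset <;> rw [Finset.subset_inter_iff]
        · exact ⟨hus, hut⟩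
        · exact ⟨hvs, hvt⟩
      have hstlt : (s ∩ t).card < q := by
        rcases lt_or_eq_of_le (Finset.card_le_card (Finset.inter_subset_left : s ∩ t ⊆ s)) with h | h
        · omega
        · exfalso
          have : s ∩ t = s := Finset.eq_of_subset_of_card_le Finset.inter_subset_left (by omega)
          have hss : s ⊆ t := by rw [← this]; exact Finset.inter_subset_right
          exact hst (Finset.eq_of_subset_of_card_le hss (by omega))
      have huvgt : p < (u ∪ v).card := by
        rcases lt_or_eq_of_le (Finset.card_le_card (Finset.subset_union_left : u ⊆ u ∪ v)) with h | h
        · omega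
        · exfalso
          have : u ∪ v = u := (Finset.eq_of_subset_of_card_le Finset.subset_union_left (by omega)).symm
          have hvu : v ⊆ u := by rw [← this]; exact Finset.subset_union_right
          exact huv (Finset.eq_of_subset_of_card_le hvu (by omega)).symm
      have := Finset.card_le_card hsubst
      omega
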